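/- If 5/3 ≤ k < 2 is real, then R_n^(k) = p_n if and only if n = 1. -/

import Mathlib

set_option maxHeartbeats 1000000

/-- Prime counting function extended to the reals: `primePi x = π(⌊x⌋)`. -/
noncomputable def primePi (x : ℝ) : ℕ := Nat.primeCounting ⌊x⌋₊

/-- The `n`-th `k`-Ramanujan prime: the smallest positive integer `m` such that
`π(x) - π(x/k) ≥ n` for all real `x ≥ m`. -/
noncomputable def Ram (k : ℝ) (n : ℕ) : ℕ :=
  sInf {m : ℕ | 0 < m ∧ ∀ x : ℝ, (m : ℝ) ≤ x → primePi (x / k) + n ≤ primePi x}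

/-- The `n`-th prime (`nthPrime 1 = 2`). -/
noncomputable def nthPrime (n : ℕ) : ℕ := Nat.nth Nat.Prime (n - 1)

open Finset ArithmeticFunction

noncomputable def SS (n : ℕ) : ℝ := ∑ k ∈ Finset.Icc 1 n, Real.log k
noncomputable def psi (n : ℕ) : ℝ := ∑ d ∈ Finset.Icc 1 n, vonMangoldt d

lemma divisors_eq_filter {k n : ℕ} (hk : k ∈ Finset.Icc 1 n) :
    k.divisors = (Finset.Icc 1 n).filter (· ∣ k) := by
  simp only [Finset.mem_Icc] at hk
  ext d
  simp only [Nat.mem_divisors, Finset.mem_filter, Finset.mem_Icc]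
  constructor
  · rintro ⟨hd, hk0⟩
    exact ⟨⟨Nat.one_le_iff_ne_zero.2 (by rintro rfl; simp [Nat.zero_dvd.1 hd] at hk0),
      (Nat.le_of_dvd (by omega) hd).trans hk.2⟩, hd⟩
  · rintro ⟨_, hd⟩
    exact ⟨hd, by omega⟩

lemma SS_eq (n : ℕ) : SS n = ∑ d ∈ Finset.Icc 1 n, vonMangoldt d * (n / d : ℕ) := by
  have h1 : SS n = ∑ k ∈ Finset.Icc 1 n, ∑ d ∈ k.divisors, vonMangoldt d := by
    exact Finset.sum_congr rfl fun k _ => (vonMangoldt_sum).symm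
  rw [h1]
  have h2 : ∀ k ∈ Finset.Icc 1 n, ∑ d ∈ k.divisors, vonMangoldt d
      = ∑ d ∈ Finset.Icc 1 n, if d ∣ k then vonMangoldt d else 0 := by
    intro k hk
    rw [divisors_eq_filter hk, Finset.sum_filter]
  rw [Finset.sum_congr rfl h2, Finset.sum_comm]
  refine Finset.sum_congr rfl fun d _ => ?_
  rw [Finset.sum_ite, Finset.sum_const_zero, add_zero, Finset.sum_const, nsmul_eq_mul]
  have : Finset.Icc 1 n = Finset.Ioc 0 n := rfl
  rw [this, Nat.Ioc_filter_dvd_card_eq_div, mul_comm]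

open Finset ArithmeticFunction

lemma SS_div_eq (n j : ℕ) :
    SS (n / j) = ∑ d ∈ Finset.Icc 1 n, vonMangoldt d * ((n / d / j : ℕ) : ℝ) := by
  rw [SS_eq]
  have ext : ∑ d ∈ Finset.Icc 1 (n/j), vonMangoldt d * ((n/j/d : ℕ):ℝ)
      = ∑ d ∈ Finset.Icc 1 n, vonMangoldt d * ((n/j/d : ℕ):ℝ) := by
    apply Finset.sum_subset (Finset.Icc_subset_Icc le_rfl (Nat.div_le_self n j))
    intro d hd hnd
    simp only [Finset.mem_Icc] at hd hnd
    have h : n / j < d := by omega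
    rw [Nat.div_eq_of_lt h]
    simp
  rw [ext]
  refine Finset.sum_congr rfl fun d _ => ?_
  rw [Nat.div_div_eq_div_mul, Nat.div_div_eq_div_mul, Nat.mul_comm]

noncomputable def FF (m : ℕ) : ℝ := (m : ℝ) - (m / 2 : ℕ) - (m / 3 : ℕ) - (m / 5 : ℕ) + (m / 30 : ℕ)

lemma FF_eq_mod (m : ℕ) : FF m = FF (m % 30) := by
  set q := m / 30 with hq
  set r := m % 30 with hr
  have h2 : m / 2 = 15 * q + r / 2 := by omega
  have h3 : m / 3 = 10 * q + r / 3 := by omega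
  have h5 : m / 5 = 6 * q + r / 5 := by omega
  have h30 : m / 30 = q + r / 30 := by omega
  have hm : m = 30 * q + r := by omega
  unfold FF
  rw [h2, h3, h5, h30, hm]
  push_cast
  ring

lemma FF_nonneg (m : ℕ) : 0 ≤ FF m := by
  rw [FF_eq_mod]
  have : m % 30 < 30 := Nat.mod_lt _ (by norm_num)
  set r := m % 30
  interval_cases r <;> norm_num [FF]

lemma FF_le_one (m : ℕ) : FF m ≤ 1 := by
  rw [FF_eq_mod]
  have : m % 30 < 30 := Nat.mod_lt _ (by norm_num)
  set r := m % 30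
  interval_cases r <;> norm_num [FF]

lemma FF_eq_one {m : ℕ} (h1 : 1 ≤ m) (h5 : m ≤ 5) : FF m = 1 := by
  interval_cases m <;> norm_num [FF]

open Finset ArithmeticFunction

noncomputable def EE (n : ℕ) : ℝ := SS n - SS (n / 2) - SS (n / 3) - SS (n / 5) + SS (n / 30)

lemma EE_eq (n : ℕ) : EE n = ∑ d ∈ Finset.Icc 1 n, vonMangoldt d * FF (n / d) := by
  unfold EE
  rw [SS_eq, SS_div_eq n 2, SS_div_eq n 3, SS_div_eq n 5, SS_div_eq n 30,
    ← Finset.sum_sub_distrib, ← Finset.sum_sub_distrib, ← Finset.sum_sub_distrib,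
    ← Finset.sum_add_distrib]
  exact Finset.sum_congr rfl fun d _ => by unfold FF; ring

lemma EE_le_psi (n : ℕ) : EE n ≤ psi n := by
  rw [EE_eq]
  exact Finset.sum_le_sum fun d _ => by
    nlinarith [vonMangoldt_nonneg (n := d), FF_le_one (n / d), FF_nonneg (n / d)]

lemma psi_mono {a b : ℕ} (h : a ≤ b) : psi a ≤ psi b :=
  Finset.sum_le_sum_of_subset_of_nonneg (Finset.Icc_subset_Icc le_rfl h)
    (fun d _ _ => vonMangoldt_nonneg)

lemma psi_sub_le_EE (n : ℕ) : psi n - psi (n / 6) ≤ EE n := by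
  rw [EE_eq]
  have hsplit : psi n - psi (n / 6) = ∑ d ∈ Finset.Ioc (n / 6) n, vonMangoldt d := by
    unfold psi
    have h6 : n / 6 ≤ n := Nat.div_le_self n 6
    rw [sub_eq_iff_eq_add, ← Finset.sum_union]
    · congr 1
      rw [Finset.union_comm]
      have : Finset.Icc 1 n = Finset.Ioc 0 n := rfl
      rw [this]
      have : Finset.Icc 1 (n/6) = Finset.Ioc 0 (n/6) := rfl
      rw [this, Finset.Ioc_union_Ioc_eq_Ioc (Nat.zero_le _) h6]
    · rw [Finset.disjoint_left]
      intro d hd hd2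
      simp only [Finset.mem_Ioc, Finset.mem_Icc] at hd hd2
      omega
  rw [hsplit]
  have hsub : Finset.Ioc (n / 6) n ⊆ Finset.Icc 1 n := by
    intro d hd
    simp only [Finset.mem_Ioc, Finset.mem_Icc] at hd ⊢
    omega
  calc ∑ d ∈ Finset.Ioc (n / 6) n, vonMangoldt d
      = ∑ d ∈ Finset.Ioc (n / 6) n, vonMangoldt d * FF (n / d) := by
        refine Finset.sum_congr rfl fun d hd => ?_
        simp only [Finset.mem_Ioc] at hd
        rw [FF_eq_one (by
            have := hd.2
            have hd1 : 1 ≤ d := by omega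
            exact Nat.one_le_div_iff (by omega) |>.2 hd.2) (by
          by_contra h
          push_neg at h
          have : 6 ≤ n / d := by omega
          have : 6 * d ≤ n := (Nat.le_div_iff_mul_le (by omega)).1 this
          have : d ≤ n / 6 := (Nat.le_div_iff_mul_le (by norm_num)).2 (by omega)
          omega), mul_one]
    _ ≤ ∑ d ∈ Finset.Icc 1 n, vonMangoldt d * FF (n / d) := by
        apply Finset.sum_le_sum_of_subset_of_nonneg hsub
        intro d _ _
        exact mul_nonneg vonMangoldt_nonneg (FF_nonneg _)

open Finset Real

/-- φ(t) = t log t - t -/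
noncomputable def phi (t : ℝ) : ℝ := t * Real.log t - t

lemma phi_mono {a b : ℝ} (ha : 1 ≤ a) (hab : a ≤ b) : phi a ≤ phi b := by
  unfold phi
  have ha0 : 0 < a := by linarith
  have hb0 : 0 < b := by linarith
  have h1 : Real.log (a / b) ≤ a / b - 1 := Real.log_le_sub_one_of_pos (by positivity)
  rw [Real.log_div (by positivity) (by positivity)] at h1
  have h2 : b * (Real.log b - Real.log a) ≥ b - a := by
    have := mul_le_mul_of_nonneg_left h1 hb0.le
    have hba : b * (a / b) = a := by field_simp
    nlinarith
  have h3 : Real.log a ≥ 0 := Real.log_nonneg ha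
  nlinarith

lemma phi_diff_le {a b : ℝ} (ha : 1 ≤ a) (hab : a ≤ b) :
    phi b - phi a ≤ (b - a) * Real.log b := by
  unfold phi
  have ha0 : 0 < a := by linarith
  have hb0 : 0 < b := by linarith
  have h1 : Real.log (b / a) ≤ b / a - 1 := Real.log_le_sub_one_of_pos (by positivity)
  rw [Real.log_div (by positivity) (by positivity)] at h1
  have h2 : a * (Real.log b - Real.log a) ≤ b - a := by
    have := mul_le_mul_of_nonneg_left h1 ha0.le
    have : a * (b / a) = b := by field_simp
    nlinarith [mul_le_mul_of_nonneg_left h1 ha0.le]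
  nlinarith

lemma SS_succ (m : ℕ) : SS (m + 1) = SS m + Real.log (m + 1) := by
  unfold SS
  rw [Finset.sum_Icc_succ_top (by omega)]
  push_cast
  ring

lemma SS_lower : ∀ m : ℕ, 1 ≤ m → phi m + 1 ≤ SS m := by
  intro m
  induction m with
  | zero => omega
  | succ p ih =>
    intro _
    rcases Nat.eq_or_lt_of_le (Nat.one_le_iff_ne_zero.2 (Nat.succ_ne_zero p)) with h | h
    · obtain rfl : p = 0 := by omega
      unfold phi SS
      norm_num
    · have hp : 1 ≤ p := by omega
      have ihp := ih hp
      rw [SS_succ]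
      have hp0 : (0:ℝ) < p := by positivity
      have key : (p:ℝ) * Real.log (1 + 1/p) ≤ 1 := by
        have h1 : Real.log (1 + 1/p) ≤ 1/p := by
          have := Real.log_le_sub_one_of_pos (x := 1 + 1/(p:ℝ)) (by positivity)
          linarith
        calc (p:ℝ) * Real.log (1 + 1/p) ≤ (p:ℝ) * (1/p) := by
              exact mul_le_mul_of_nonneg_left h1 hp0.le
          _ = 1 := by field_simp
      have hlog : Real.log ((p:ℝ) + 1) = Real.log p + Real.log (1 + 1/p) := by
        rw [← Real.log_mul (by positivity) (by positivity)]
        congr 1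
        field_simp
      unfold phi at ihp ⊢
      push_cast
      rw [hlog] at *
      nlinarith [Real.log_nonneg (show (1:ℝ) ≤ p by exact_mod_cast hp)]

lemma SS_upper : ∀ m : ℕ, 1 ≤ m → SS m ≤ phi m + 1 + Real.log m := by
  intro m
  induction m with
  | zero => omega
  | succ p ih =>
    intro _
    rcases Nat.eq_or_lt_of_le (Nat.one_le_iff_ne_zero.2 (Nat.succ_ne_zero p)) with h | h
    · obtain rfl : p = 0 := by omega
      unfold phi SS
      norm_num
    · have hp : 1 ≤ p := by omega
      have ihp := ih hp
      rw [SS_succ]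
      have hp0 : (0:ℝ) < p := by positivity
      have key : 1 ≤ ((p:ℝ) + 1) * Real.log (1 + 1/p) := by
        have h1 : Real.log ((p:ℝ)/(p+1)) ≤ (p:ℝ)/(p+1) - 1 :=
          Real.log_le_sub_one_of_pos (by positivity)
        have h2 : Real.log ((p:ℝ)/(p+1)) = - Real.log (1 + 1/p) := by
          rw [← Real.log_inv]
          congr 1
          field_simp
        rw [h2] at h1
        have h3 : (p:ℝ)/(p+1) - 1 = -(1/((p:ℝ)+1)) := by field_simp; ring
        rw [h3] at h1
        have h4 : 1/((p:ℝ)+1) ≤ Real.log (1 + 1/p) := by linarith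
        calc (1:ℝ) = ((p:ℝ)+1) * (1/((p:ℝ)+1)) := by field_simp
          _ ≤ ((p:ℝ)+1) * Real.log (1 + 1/p) := by
              exact mul_le_mul_of_nonneg_left h4 (by positivity)
      have hlog : Real.log ((p:ℝ) + 1) = Real.log p + Real.log (1 + 1/p) := by
        rw [← Real.log_mul (by positivity) (by positivity)]
        congr 1
        field_simp
      unfold phi at ihp ⊢
      push_cast
      rw [hlog] at *
      nlinarith [Real.log_nonneg (show (1:ℝ) ≤ p by exact_mod_cast hp)]

open Finset Real

noncomputable def lam : ℝ := (7/15) * Real.log 2 + (3/10) * Real.log 3 + (1/6) * Real.log 5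

lemma pow_log_le {a b : ℕ} {p q : ℕ} (ha : 2 ≤ a) (hb : 2 ≤ b) (h : a ^ p ≤ b ^ q) :
    (p : ℝ) * Real.log a ≤ (q : ℝ) * Real.log b := by
  have h1 : Real.log ((a:ℝ) ^ p) ≤ Real.log ((b:ℝ) ^ q) := by
    apply Real.log_le_log (by positivity)
    exact_mod_cast h
  rwa [Real.log_pow, Real.log_pow] at h1

lemma log3_lb : (79/50 : ℝ) * Real.log 2 ≤ Real.log 3 := by
  have := pow_log_le (a := 2) (b := 3) (p := 79) (q := 50) (by norm_num) (by norm_num) (by norm_num)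
  push_cast at this
  linarith

lemma log3_ub : Real.log 3 ≤ (8/5 : ℝ) * Real.log 2 := by
  have := pow_log_le (a := 3) (b := 2) (p := 5) (q := 8) (by norm_num) (by norm_num) (by norm_num)
  push_cast at this
  linarith

lemma log5_lb : (58/25 : ℝ) * Real.log 2 ≤ Real.log 5 := by
  have := pow_log_le (a := 2) (b := 5) (p := 58) (q := 25) (by norm_num) (by norm_num) (by norm_num)
  push_cast at this
  linarith

lemma log5_ub : Real.log 5 ≤ (59/25 : ℝ) * Real.log 2 := by
  have := pow_log_le (a := 5) (b := 2) (p := 25) (q := 59) (by norm_num) (by norm_num) (by norm_num)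
  push_cast at this
  linarith

lemma lam_lb : (0.92 : ℝ) ≤ lam := by
  have h2 := Real.log_two_gt_d9
  have h3 := log3_lb
  have h5 := log5_lb
  unfold lam
  nlinarith

lemma lam_ub : lam ≤ (0.93 : ℝ) := by
  have h2 := Real.log_two_lt_d9
  have h2' := Real.log_two_gt_d9
  have h3 := log3_ub
  have h5 := log5_ub
  unfold lam
  nlinarith

lemma bracket_identity {x : ℝ} (hx : 0 < x) :
    phi x - phi (x/2) - phi (x/3) - phi (x/5) + phi (x/30) = lam * x := by
  unfold phi lam
  have l30 : Real.log 30 = Real.log 2 + Real.log 3 + Real.log 5 := by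
    rw [show (30:ℝ) = 2 * 3 * 5 by norm_num, Real.log_mul (by positivity) (by norm_num),
      Real.log_mul (by norm_num) (by norm_num)]
  rw [Real.log_div (ne_of_gt hx) (by norm_num), Real.log_div (ne_of_gt hx) (by norm_num),
    Real.log_div (ne_of_gt hx) (by norm_num), Real.log_div (ne_of_gt hx) (by norm_num), l30]
  ring

lemma cast_div_bounds (n j : ℕ) (hj : 0 < j) :
    (n:ℝ)/j - 1 ≤ ((n / j : ℕ) : ℝ) ∧ ((n / j : ℕ) : ℝ) ≤ (n:ℝ)/j := by
  constructor
  · have h : n < j * (n / j) + j := by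
      have h1 := Nat.div_add_mod n j
      have h2 := Nat.mod_lt n hj
      omega
    have : (n:ℝ) < j * ((n/j : ℕ):ℝ) + j := by exact_mod_cast h
    have hj' : (0:ℝ) < j := by exact_mod_cast hj
    rw [div_sub_one (ne_of_gt hj'), div_le_iff₀ hj']
    nlinarith
  · exact Nat.cast_div_le

lemma EE_lower {n : ℕ} (hn : 30 ≤ n) : 0.92 * n - 4 * Real.log n - 1 ≤ EE n := by
  have hx : (0:ℝ) < n := by positivity
  have hx30 : (30:ℝ) ≤ n := by exact_mod_cast hn
  have h2 := cast_div_bounds n 2 (by norm_num)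
  have h3 := cast_div_bounds n 3 (by norm_num)
  have h5 := cast_div_bounds n 5 (by norm_num)
  have h30 := cast_div_bounds n 30 (by norm_num)
  have hn2 : 1 ≤ n / 2 := by omega
  have hn3 : 1 ≤ n / 3 := by omega
  have hn5 : 1 ≤ n / 5 := by omega
  have hn30 : 1 ≤ n / 30 := by omega
  have c2 : (1:ℝ) ≤ ((n/2 : ℕ):ℝ) := by exact_mod_cast hn2
  have c3 : (1:ℝ) ≤ ((n/3 : ℕ):ℝ) := by exact_mod_cast hn3
  have c5 : (1:ℝ) ≤ ((n/5 : ℕ):ℝ) := by exact_mod_cast hn5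
  have c30 : (1:ℝ) ≤ ((n/30 : ℕ):ℝ) := by exact_mod_cast hn30
  -- lower bound for SS n
  have s1 : phi n + 1 ≤ SS n := SS_lower n (by omega)
  -- upper bounds for SS (n/j), j = 2,3,5
  have s2 : SS (n/2) ≤ phi ((n:ℝ)/2) + 1 + Real.log ((n:ℝ)/2) := by
    have := SS_upper (n/2) hn2
    have hm := phi_mono c2 h2.2
    have hl : Real.log ((n/2:ℕ):ℝ) ≤ Real.log ((n:ℝ)/2) := Real.log_le_log (by linarith) h2.2
    linarith
  have s3 : SS (n/3) ≤ phi ((n:ℝ)/3) + 1 + Real.log ((n:ℝ)/3) := by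
    have := SS_upper (n/3) hn3
    have hm := phi_mono c3 h3.2
    have hl : Real.log ((n/3:ℕ):ℝ) ≤ Real.log ((n:ℝ)/3) := Real.log_le_log (by linarith) h3.2
    linarith
  have s5 : SS (n/5) ≤ phi ((n:ℝ)/5) + 1 + Real.log ((n:ℝ)/5) := by
    have := SS_upper (n/5) hn5
    have hm := phi_mono c5 h5.2
    have hl : Real.log ((n/5:ℕ):ℝ) ≤ Real.log ((n:ℝ)/5) := Real.log_le_log (by linarith) h5.2
    linarith
  -- lower bound for SS (n/30)
  have s30 : phi ((n:ℝ)/30) - Real.log n + 1 ≤ SS (n/30) := by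
    have hs := SS_lower (n/30) hn30
    have hd := phi_diff_le c30 h30.2
    have hl1 : Real.log ((n:ℝ)/30) ≤ Real.log n := by
      apply Real.log_le_log (by linarith)
      linarith
    have hl0 : 0 ≤ Real.log ((n:ℝ)/30) := Real.log_nonneg (by linarith)
    have hb : ((n:ℝ)/30 - ((n/30:ℕ):ℝ)) * Real.log ((n:ℝ)/30) ≤ 1 * Real.log n := by
      apply mul_le_mul (by linarith) hl1 hl0 (by norm_num)
    nlinarith
  -- combine
  have hb := bracket_identity hx
  have hlog2 : Real.log ((n:ℝ)/2) ≤ Real.log n := Real.log_le_log (by linarith) (by linarith)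
  have hlog3 : Real.log ((n:ℝ)/3) ≤ Real.log n := Real.log_le_log (by linarith) (by linarith)
  have hlog5 : Real.log ((n:ℝ)/5) ≤ Real.log n := Real.log_le_log (by linarith) (by linarith)
  have hlam : 0.92 * (n:ℝ) ≤ lam * n := by
    have := lam_lb
    nlinarith
  unfold EE
  linarith

lemma EE_upper {n : ℕ} (hn : 30 ≤ n) : EE n ≤ 0.93 * n + 5 * Real.log n + 2 := by
  have hx : (0:ℝ) < n := by positivity
  have hx30 : (30:ℝ) ≤ n := by exact_mod_cast hn
  have h2 := cast_div_bounds n 2 (by norm_num)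
  have h3 := cast_div_bounds n 3 (by norm_num)
  have h5 := cast_div_bounds n 5 (by norm_num)
  have h30 := cast_div_bounds n 30 (by norm_num)
  have hn2 : 1 ≤ n / 2 := by omega
  have hn3 : 1 ≤ n / 3 := by omega
  have hn5 : 1 ≤ n / 5 := by omega
  have hn30 : 1 ≤ n / 30 := by omega
  have c2 : (1:ℝ) ≤ ((n/2 : ℕ):ℝ) := by exact_mod_cast hn2
  have c3 : (1:ℝ) ≤ ((n/3 : ℕ):ℝ) := by exact_mod_cast hn3
  have c5 : (1:ℝ) ≤ ((n/5 : ℕ):ℝ) := by exact_mod_cast hn5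
  have c30 : (1:ℝ) ≤ ((n/30 : ℕ):ℝ) := by exact_mod_cast hn30
  have hlogn0 : 0 ≤ Real.log n := Real.log_nonneg (by linarith)
  have s1 : SS n ≤ phi n + 1 + Real.log n := SS_upper n (by omega)
  have key : ∀ j : ℕ, 2 ≤ j → j ≤ 30 → 1 ≤ n / j →
      phi ((n:ℝ)/j) - Real.log n + 1 ≤ SS (n/j) := by
    intro j hj2 hj30 hnj
    have hj0 : (0:ℝ) < j := by positivity
    have hcb := cast_div_bounds n j (by omega)
    have cj : (1:ℝ) ≤ ((n/j : ℕ):ℝ) := by exact_mod_cast hnj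
    have hs := SS_lower (n/j) hnj
    have hd := phi_diff_le cj hcb.2
    have hxj1 : (1:ℝ) ≤ (n:ℝ)/j := by linarith
    have hl1 : Real.log ((n:ℝ)/j) ≤ Real.log n := by
      apply Real.log_le_log (by linarith)
      calc (n:ℝ)/j ≤ (n:ℝ)/2 := by
            apply div_le_div_of_nonneg_left (by linarith) (by norm_num)
            exact_mod_cast hj2
        _ ≤ n := by linarith
    have hl0 : 0 ≤ Real.log ((n:ℝ)/j) := Real.log_nonneg hxj1
    have hb : ((n:ℝ)/j - ((n/j:ℕ):ℝ)) * Real.log ((n:ℝ)/j) ≤ 1 * Real.log n := by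
      apply mul_le_mul (by linarith [hcb.1]) hl1 hl0 (by norm_num)
    nlinarith
  have s2 := key 2 (by norm_num) (by norm_num) hn2
  have s3 := key 3 (by norm_num) (by norm_num) hn3
  have s5 := key 5 (by norm_num) (by norm_num) hn5
  have s30 : SS (n/30) ≤ phi ((n:ℝ)/30) + 1 + Real.log n := by
    have := SS_upper (n/30) hn30
    have hm := phi_mono c30 h30.2
    have hl : Real.log ((n/30:ℕ):ℝ) ≤ Real.log n := by
      apply Real.log_le_log (by linarith)
      linarith
    linarith
  have hb := bracket_identity hx
  have hlam : lam * (n:ℝ) ≤ 0.93 * n := by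
    have := lam_ub
    nlinarith
  unfold EE
  linarith

open Finset Real ArithmeticFunction

lemma psi_lower {n : ℕ} (hn : 30 ≤ n) : 0.92 * n - 4 * Real.log n - 1 ≤ psi n :=
  (EE_lower hn).trans (EE_le_psi n)

lemma psi_29 : psi 29 ≤ 110 := by
  have h : ∀ d ∈ Finset.Icc 1 29, vonMangoldt d ≤ Real.log 32 := by
    intro d hd
    simp only [Finset.mem_Icc] at hd
    calc vonMangoldt d ≤ Real.log d := vonMangoldt_le_log
      _ ≤ Real.log 32 := by
          have h1 : (1:ℝ) ≤ (d:ℝ) := by exact_mod_cast hd.1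
          apply Real.log_le_log (by linarith)
          exact_mod_cast (by omega : d ≤ 32)
  calc psi 29 ≤ ∑ _d ∈ Finset.Icc 1 29, Real.log 32 := Finset.sum_le_sum h
    _ = 29 * Real.log 32 := by rw [Finset.sum_const, Nat.card_Icc]; norm_num
    _ = 145 * Real.log 2 := by
        rw [show (32:ℝ) = 2^5 by norm_num, Real.log_pow]
        push_cast; ring
    _ ≤ 110 := by nlinarith [Real.log_two_lt_d9]

lemma psi_upper : ∀ n : ℕ, psi n ≤ 1.116 * n + 6 * (Real.log (n+1))^2 + 110 := by
  intro n
  induction n using Nat.strong_induction_on with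
  | _ n ih =>
    rcases le_or_gt n 29 with h | h
    · have h1 : psi n ≤ psi 29 := psi_mono h
      have h2 : (0:ℝ) ≤ 1.116 * n := by positivity
      have h3 : (0:ℝ) ≤ 6 * (Real.log (n+1))^2 := by positivity
      linarith [psi_29]
    · have hn : 30 ≤ n := h
      have h6lt : n / 6 < n := Nat.div_lt_self (by omega) (by norm_num)
      have ih6 := ih (n/6) h6lt
      have hEE := EE_upper hn
      have hkey := psi_sub_le_EE n
      have hc : ((n/6 : ℕ):ℝ) ≤ (n:ℝ)/6 := Nat.cast_div_le
      -- log bookkeeping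
      set u := Real.log (((n/6 : ℕ):ℝ) + 1) with hu
      set v := Real.log ((n:ℝ)+1) with hv
      have hu0 : 0 ≤ u := Real.log_nonneg (le_add_of_nonneg_left (Nat.cast_nonneg _))
      have h31 : 3 * ((n/6 : ℕ) + 1) ≤ n + 1 := by omega
      have huv : u + Real.log 3 ≤ v := by
        rw [hu, hv, ← Real.log_mul ((by positivity : (0:ℝ) < ((n/6:ℕ):ℝ) + 1).ne') (by norm_num)]
        apply Real.log_le_log (by positivity)
        calc (((n/6:ℕ):ℝ) + 1) * 3 = ((3 * ((n/6:ℕ) + 1) : ℕ) : ℝ) := by push_cast; ring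
          _ ≤ ((n + 1 : ℕ):ℝ) := by exact_mod_cast h31
          _ = (n:ℝ) + 1 := by push_cast; ring
      have hl3 : (1.09:ℝ) ≤ Real.log 3 := by nlinarith [log3_lb, Real.log_two_gt_d9]
      have hv27 : (2.77:ℝ) ≤ v := by
        have : (16:ℝ) ≤ (n:ℝ)+1 := by
          have : (30:ℝ) ≤ (n:ℝ) := by exact_mod_cast hn
          linarith
        have h16 : Real.log 16 ≤ v := by
          rw [hv]; exact Real.log_le_log (by norm_num) this
        have : Real.log 16 = 4 * Real.log 2 := by
          rw [show (16:ℝ) = 2^4 by norm_num, Real.log_pow]; push_cast; ring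
        nlinarith [Real.log_two_gt_d9]
      have hlognv : Real.log n ≤ v := by
        rw [hv]
        apply Real.log_le_log (by positivity)
        linarith
      have hsq : 6 * u^2 + 5 * Real.log n + 2 ≤ 6 * v^2 := by
        have hd : 1.09 ≤ v - u := by linarith
        have hs : v ≤ v + u := by linarith
        have key : 6 * (v - u) * (v + u) ≥ 6 * 1.09 * v := by
          have h1 : (0:ℝ) ≤ v := by linarith
          nlinarith
        have expand : 6 * (v - u) * (v + u) = 6 * v^2 - 6 * u^2 := by ring
        nlinarith
      have hlogn0 : 0 ≤ Real.log n := Real.log_nonneg (by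
        have : (30:ℝ) ≤ (n:ℝ) := by exact_mod_cast hn
        linarith)
      calc psi n ≤ EE n + psi (n/6) := by linarith
        _ ≤ 0.93 * n + 5 * Real.log n + 2 + (1.116 * ((n/6:ℕ):ℝ) + 6 * u^2 + 110) := by
            linarith
        _ ≤ 0.93 * n + 5 * Real.log n + 2 + 1.116 * ((n:ℝ)/6) + 6 * u^2 + 110 := by linarith
        _ ≤ 1.116 * n + 6 * v^2 + 110 := by linarith

open Finset Real ArithmeticFunction

noncomputable def theta (n : ℕ) : ℝ :=
  ∑ p ∈ (Finset.Icc 1 n).filter Nat.Prime, Real.log p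

lemma theta_le_psi (n : ℕ) : theta n ≤ psi n := by
  unfold theta psi
  rw [← Finset.sum_filter_add_sum_filter_not (Finset.Icc 1 n) Nat.Prime (fun d => vonMangoldt d)]
  have h1 : ∑ p ∈ (Finset.Icc 1 n).filter Nat.Prime, Real.log p
      = ∑ p ∈ (Finset.Icc 1 n).filter Nat.Prime, vonMangoldt p := by
    refine Finset.sum_congr rfl fun p hp => ?_
    simp only [Finset.mem_filter] at hp
    rw [vonMangoldt_apply_prime hp.2]
  rw [h1]
  have h2 : 0 ≤ ∑ d ∈ (Finset.Icc 1 n).filter (fun d => ¬ Nat.Prime d), vonMangoldt d :=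
    Finset.sum_nonneg fun d _ => vonMangoldt_nonneg
  linarith

lemma psi_le_theta_add {n : ℕ} (hn : 1 ≤ n) :
    psi n ≤ theta n + 2 * Real.sqrt n * (Real.log n)^2 := by
  classical
  have hsplit : psi n = theta n + ∑ d ∈ (Finset.Icc 1 n).filter (fun d => ¬ Nat.Prime d),
      vonMangoldt d := by
    unfold theta psi
    rw [← Finset.sum_filter_add_sum_filter_not (Finset.Icc 1 n) Nat.Prime (fun d => vonMangoldt d)]
    congr 1
    refine Finset.sum_congr rfl fun p hp => ?_
    simp only [Finset.mem_filter] at hp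
    rw [vonMangoldt_apply_prime hp.2]
  set Bad := (Finset.Icc 1 n).filter (fun d => IsPrimePow d ∧ ¬ Nat.Prime d) with hBad
  have hsum2 : ∑ d ∈ (Finset.Icc 1 n).filter (fun d => ¬ Nat.Prime d), vonMangoldt d
      = ∑ d ∈ Bad, vonMangoldt d := by
    have h1 : ∑ d ∈ ((Finset.Icc 1 n).filter (fun d => ¬ Nat.Prime d)).filter
        (fun d => IsPrimePow d), vonMangoldt d
        = ∑ d ∈ (Finset.Icc 1 n).filter (fun d => ¬ Nat.Prime d), vonMangoldt d :=
      Finset.sum_filter_of_ne (fun d _ hd => by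
        by_contra hippe
        exact hd (vonMangoldt_eq_zero_iff.2 hippe))
    rw [← h1]
    congr 1
    rw [Finset.filter_filter]
    ext d
    simp only [Finset.mem_filter, hBad]
    tauto
  -- each element of Bad has vonMangoldt ≤ log n
  have hterm : ∀ d ∈ Bad, vonMangoldt d ≤ Real.log n := by
    intro d hd
    simp only [hBad, Finset.mem_filter, Finset.mem_Icc] at hd
    calc vonMangoldt d ≤ Real.log d := vonMangoldt_le_log
      _ ≤ Real.log n := Real.log_le_log (by exact_mod_cast hd.1.1) (by exact_mod_cast hd.1.2)
  -- card bound
  have hcard : Bad.card ≤ Nat.sqrt n * Nat.log 2 n := by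
    have hinj : ∀ d ∈ Bad, (d.minFac, d.factorization d.minFac) ∈
        Finset.Icc 2 (Nat.sqrt n) ×ˢ Finset.Icc 2 (Nat.log 2 n) := by
      intro d hd
      simp only [hBad, Finset.mem_filter, Finset.mem_Icc] at hd
      obtain ⟨⟨hd1, hdn⟩, hpp, hnp⟩ := hd
      have hne1 : d ≠ 1 := by
        intro h; rw [h] at hpp; exact (not_isPrimePow_one hpp)
      have hp : d.minFac.Prime := Nat.minFac_prime hne1
      set p := d.minFac
      set k := d.factorization p with hk
      have hrec : p ^ k = d := hpp.minFac_pow_factorization_eq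
      have hk2 : 2 ≤ k := by
        rcases Nat.lt_or_ge k 2 with h | h
        · interval_cases k
          · simp at hrec; omega
          · rw [pow_one] at hrec; rw [← hrec] at hnp; exact absurd hp hnp
        · exact h
      have hpsq : p * p ≤ n := by
        calc p * p = p ^ 2 := (sq p).symm
          _ ≤ p ^ k := Nat.pow_le_pow_right hp.one_lt.le hk2
          _ = d := hrec
          _ ≤ n := hdn
      have h2k : 2 ^ k ≤ n := by
        calc 2 ^ k ≤ p ^ k := Nat.pow_le_pow_left hp.two_le k
          _ = d := hrec
          _ ≤ n := hdn
      simp only [Finset.mem_product, Finset.mem_Icc]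
      refine ⟨⟨hp.two_le, Nat.le_sqrt.2 hpsq⟩, hk2,
        (Nat.le_log_iff_pow_le (by norm_num) (by omega)).2 h2k⟩
    have hinj2 : Set.InjOn (fun d : ℕ => (d.minFac, d.factorization d.minFac)) ↑Bad := by
      intro d hd e he hde
      simp only [Finset.coe_filter, Set.mem_setOf_eq, hBad, Finset.mem_coe,
        Finset.mem_filter] at hd he
      have hd' : d.minFac ^ d.factorization d.minFac = d := hd.2.1.minFac_pow_factorization_eq
      have he' : e.minFac ^ e.factorization e.minFac = e := he.2.1.minFac_pow_factorization_eq
      have h1 : d.minFac = e.minFac := congrArg Prod.fst hde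
      have h2 : d.factorization d.minFac = e.factorization e.minFac := congrArg Prod.snd hde
      rw [← hd', ← he', h1]
      rw [h1] at h2
      rw [h2]
    calc Bad.card ≤ (Finset.Icc 2 (Nat.sqrt n) ×ˢ Finset.Icc 2 (Nat.log 2 n)).card :=
        Finset.card_le_card_of_injOn _ hinj hinj2
      _ = (Finset.Icc 2 (Nat.sqrt n)).card * (Finset.Icc 2 (Nat.log 2 n)).card :=
        Finset.card_product _ _
      _ ≤ Nat.sqrt n * Nat.log 2 n := by
        rw [Nat.card_Icc, Nat.card_Icc]
        apply Nat.mul_le_mul <;> omega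
  -- real casts
  have hlogn0 : 0 ≤ Real.log n := Real.log_nonneg (by exact_mod_cast hn)
  have hsqrt : ((Nat.sqrt n : ℕ) : ℝ) ≤ Real.sqrt n := by
    apply Real.le_sqrt_of_sq_le
    have := Nat.sqrt_le' n
    exact_mod_cast this
  have hlog2n : ((Nat.log 2 n : ℕ) : ℝ) ≤ 2 * Real.log n := by
    have hpow : (2:ℕ) ^ (Nat.log 2 n) ≤ n := Nat.pow_log_le_self 2 (by omega)
    have : ((Nat.log 2 n : ℕ) : ℝ) * Real.log 2 ≤ Real.log n := by
      have h1 : Real.log ((2:ℝ) ^ (Nat.log 2 n)) ≤ Real.log n := by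
        apply Real.log_le_log (by positivity)
        exact_mod_cast hpow
      rwa [Real.log_pow] at h1
    nlinarith [Real.log_two_gt_d9, (Nat.cast_nonneg (Nat.log 2 n) : (0:ℝ) ≤ _)]
  have hsum3 : ∑ d ∈ Bad, vonMangoldt d ≤ (Bad.card : ℝ) * Real.log n := by
    calc ∑ d ∈ Bad, vonMangoldt d ≤ ∑ _d ∈ Bad, Real.log n := Finset.sum_le_sum hterm
      _ = (Bad.card : ℝ) * Real.log n := by rw [Finset.sum_const, nsmul_eq_mul]
  have hcardR : (Bad.card : ℝ) ≤ Real.sqrt n * (2 * Real.log n) := by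
    calc (Bad.card : ℝ) ≤ ((Nat.sqrt n * Nat.log 2 n : ℕ) : ℝ) := by exact_mod_cast hcard
      _ = ((Nat.sqrt n : ℕ):ℝ) * ((Nat.log 2 n : ℕ):ℝ) := by push_cast; ring
      _ ≤ Real.sqrt n * (2 * Real.log n) := by
          apply mul_le_mul hsqrt hlog2n (Nat.cast_nonneg _) (Real.sqrt_nonneg _)
  have : ∑ d ∈ Bad, vonMangoldt d ≤ 2 * Real.sqrt n * (Real.log n)^2 := by
    calc ∑ d ∈ Bad, vonMangoldt d ≤ (Bad.card : ℝ) * Real.log n := hsum3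
      _ ≤ Real.sqrt n * (2 * Real.log n) * Real.log n := by
          apply mul_le_mul_of_nonneg_right hcardR hlogn0
      _ = 2 * Real.sqrt n * (Real.log n)^2 := by ring
  linarith [hsplit, hsum2, this]

lemma theta_mono {a b : ℕ} (h : a ≤ b) : theta a ≤ theta b := by
  unfold theta
  apply Finset.sum_le_sum_of_subset_of_nonneg
  · apply Finset.filter_subset_filter
    exact Finset.Icc_subset_Icc le_rfl h
  · intro p hp _
    simp only [Finset.mem_filter, Finset.mem_Icc] at hp
    exact Real.log_nonneg (by exact_mod_cast hp.2.one_lt.le)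

lemma theta_eq_of_no_primes {a b : ℕ} (hba : b ≤ a)
    (h : ∀ q, q.Prime → q ≤ a → q ≤ b) : theta a = theta b := by
  unfold theta
  congr 1
  ext q
  simp only [Finset.mem_filter, Finset.mem_Icc]
  constructor
  · rintro ⟨⟨h1, h2⟩, hq⟩
    exact ⟨⟨h1, h q hq h2⟩, hq⟩
  · rintro ⟨⟨h1, h2⟩, hq⟩
    exact ⟨⟨h1, h2.trans hba⟩, hq⟩

open Finset Real ArithmeticFunction

lemma KI {a : ℝ} (ha : (2:ℝ)^25 ≤ a) :
    2 * Real.sqrt a * (Real.log a)^2 + 7 * (Real.log a)^2 + 120 ≤ 0.25 * a := by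
  have ha0 : (0:ℝ) < a := by nlinarith [pow_pos (show (0:ℝ) < 2 by norm_num) 25]
  have ha1 : (1:ℝ) ≤ a := by nlinarith [pow_pos (show (0:ℝ) < 2 by norm_num) 25]
  set L := Real.log a with hL
  have hL0 : 0 ≤ L := Real.log_nonneg ha1
  set s := Real.sqrt a with hs
  have hs0 : 0 ≤ s := Real.sqrt_nonneg a
  have hss : s^2 = a := Real.sq_sqrt ha0.le
  rcases le_or_gt a ((2:ℝ)^32) with hcase | hcase
  · -- medium range
    have hLub : L ≤ 22.19 := by
      have h1 : L ≤ Real.log ((2:ℝ)^32) := Real.log_le_log ha0 hcase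
      rw [Real.log_pow] at h1
      push_cast at h1
      nlinarith [Real.log_two_lt_d9]
    have hsl : (5792:ℝ) ≤ s := by
      rw [hs, show (5792:ℝ) = Real.sqrt (5792^2) by rw [Real.sqrt_sq]; norm_num]
      apply Real.sqrt_le_sqrt
      nlinarith
    have hL2 : L^2 ≤ 492.4 := by nlinarith
    nlinarith
  · -- large range
    set c := Real.sqrt s with hc
    set t := Real.sqrt c with ht
    set u := Real.sqrt t with hu
    have hc0 : 0 ≤ c := Real.sqrt_nonneg _
    have ht0 : 0 ≤ t := Real.sqrt_nonneg _
    have hu0 : 0 ≤ u := Real.sqrt_nonneg _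
    have hcc : c^2 = s := Real.sq_sqrt hs0
    have htt : t^2 = c := Real.sq_sqrt hc0
    have huu : u^2 = t := Real.sq_sqrt ht0
    -- t ≥ 16
    have hs16 : (2:ℝ)^16 ≤ s := by
      rw [hs, show ((2:ℝ)^16) = Real.sqrt ((2^16)^2) by rw [Real.sqrt_sq]; positivity]
      apply Real.sqrt_le_sqrt
      nlinarith
    have hc8 : (2:ℝ)^8 ≤ c := by
      rw [hc, show ((2:ℝ)^8) = Real.sqrt ((2^8)^2) by rw [Real.sqrt_sq]; positivity]
      apply Real.sqrt_le_sqrt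
      nlinarith
    have ht16 : (16:ℝ) ≤ t := by
      rw [ht, show (16:ℝ) = Real.sqrt (16^2) by rw [Real.sqrt_sq]; norm_num]
      apply Real.sqrt_le_sqrt
      nlinarith
    have htpos : (0:ℝ) < t := by linarith
    have hupos : (0:ℝ) < u := by
      rcases lt_or_ge 0 u with h | h
      · exact h
      · exfalso
        have : u = 0 := le_antisymm h hu0
        rw [this] at huu
        simp at huu
        linarith
    -- L = 8 log t
    have hLt : L = 8 * Real.log t := by
      have h1 : Real.log s = Real.log a / 2 := by rw [hs, Real.log_sqrt ha0.le]
      have h2 : Real.log c = Real.log s / 2 := by rw [hc, Real.log_sqrt hs0]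
      have h3 : Real.log t = Real.log c / 2 := by rw [ht, Real.log_sqrt hc0]
      rw [hL]
      linarith [h3, h2, h1]
    have hlogt : Real.log t ≤ 2 * u := by
      have h1 : Real.log u ≤ u - 1 := Real.log_le_sub_one_of_pos hupos
      have h2 : Real.log t = 2 * Real.log u := by
        have := Real.log_sqrt ht0
        rw [← hu] at this
        linarith [this]
      linarith
    have hL16u : L ≤ 16 * u := by rw [hLt]; linarith
    have hL2 : L^2 ≤ 256 * t := by
      have h1 : L^2 ≤ (16*u)^2 := by nlinarith
      have h2 : (16*u)^2 = 256 * u^2 := by ring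
      rw [h2, huu] at h1
      exact h1
    -- a = t^8, s = t^4
    have hst : s = t^4 := by
      have : s = (t^2)^2 := by rw [htt, hcc]
      rw [this]; ring
    have hat : a = t^8 := by
      have : a = ((t^2)^2)^2 := by rw [htt, hcc, hss]
      rw [this]; ring
    rw [hat, hst]
    -- goal: 2*t^4*L^2 + 7*L^2 + 120 ≤ 0.25*t^8
    have ht4 : (0:ℝ) ≤ t^4 := by positivity
    have step1 : 2*t^4*L^2 ≤ 512 * t^5 := by nlinarith
    have step2 : 7*L^2 ≤ 1792 * t := by nlinarith
    have ht3 : (4096:ℝ) ≤ t^3 := by nlinarith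
    have step3 : 1024 * t^5 ≤ 0.25 * t^8 := by nlinarith [pow_nonneg ht0 5]
    have step4 : 512 * t^5 + 1792*t + 120 ≤ 1024 * t^5 := by nlinarith [pow_nonneg ht0 4]
    linarith

lemma K_large {a : ℕ} (ha : 2^25 ≤ a) :
    ∃ q, q.Prime ∧ q ≤ a ∧ 3*(a+1) ≤ 5*q := by
  by_contra hcon
  push_neg at hcon
  set b := (3*a+2)/5 with hb
  have hba : b ≤ a := by omega
  have hb1 : 1 ≤ b := by omega
  have h30 : 30 ≤ a := by omega
  have hqb : ∀ q, q.Prime → q ≤ a → q ≤ b := by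
    intro q hq hqa
    have := hcon q hq hqa
    omega
  have hth : theta a = theta b := theta_eq_of_no_primes hba hqb
  have h1 := psi_lower h30
  have h2 := psi_le_theta_add (n := a) (by omega)
  have h3 := theta_le_psi b
  have h4 := psi_upper b
  -- casts
  have hbR : (b:ℝ) ≤ (3*(a:ℝ)+2)/5 := by
    have h5 : ((((3*a+2) : ℕ) / 5 : ℕ) : ℝ) ≤ (((3*a+2):ℕ):ℝ)/5 := Nat.cast_div_le
    rw [hb]
    push_cast at h5 ⊢
    linarith
  have hbalog : Real.log ((b:ℝ)+1) ≤ Real.log a := by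
    apply Real.log_le_log (by positivity)
    have h6 : b + 1 ≤ a := by omega
    have h7 : ((b:ℝ)+1) ≤ (a:ℝ) := by exact_mod_cast h6
    linarith
  have hKI := KI (a := (a:ℝ)) (by exact_mod_cast ha)
  have hL4 : (4:ℝ) ≤ Real.log a := by
    have h5 : Real.log ((2:ℝ)^25) ≤ Real.log a := by
      apply Real.log_le_log (by positivity)
      exact_mod_cast ha
    rw [Real.log_pow] at h5
    push_cast at h5
    nlinarith [Real.log_two_gt_d9]
  have hsq : (Real.log ((b:ℝ)+1))^2 ≤ (Real.log a)^2 := by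
    have h0 : 0 ≤ Real.log ((b:ℝ)+1) := Real.log_nonneg (by
      have : (1:ℝ) ≤ (b:ℝ) := by exact_mod_cast hb1
      linarith)
    nlinarith
  have hbig : 1.116 * (b:ℝ) ≤ 1.116 * ((3*(a:ℝ)+2)/5) := by linarith
  have hL2 : (Real.log a)^2 ≥ 4 * Real.log a := by nlinarith
  have ha0 : (0:ℝ) < a := by positivity
  rw [hth] at h2
  linarith

def PP (a : ℕ) : Prop := ∃ p, p.Prime ∧ p ≤ a ∧ 3*(a+1) ≤ 5*p

lemma cov_step (q q' B : ℕ) (hq : q.Prime) (h3 : 3*q' ≤ 5*q)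
    (cov : ∀ a, q' ≤ a → a < B → PP a) : ∀ a, q ≤ a → a < B → PP a := by
  intro a haq haB
  rcases le_or_gt q' a with h | h
  · exact cov a h haB
  · exact ⟨q, hq, haq, by omega⟩

lemma K_small : ∀ a, 2 ≤ a → a < 2^25 → PP a := by
  have c0 : ∀ a, 20446519 ≤ a → a < 2^25 → PP a := by
    intro a ha haB
    exact ⟨20446519, by norm_num, ha, by omega⟩
  have c1 : ∀ a, 12267923 ≤ a → a < 2^25 → PP a :=
    cov_step 12267923 20446519 _ (by norm_num) (by norm_num) c0
  have c2 : ∀ a, 7360763 ≤ a → a < 2^25 → PP a :=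
    cov_step 7360763 12267923 _ (by norm_num) (by norm_num) c1
  have c3 : ∀ a, 4416473 ≤ a → a < 2^25 → PP a :=
    cov_step 4416473 7360763 _ (by norm_num) (by norm_num) c2
  have c4 : ∀ a, 2649893 ≤ a → a < 2^25 → PP a :=
    cov_step 2649893 4416473 _ (by norm_num) (by norm_num) c3
  have c5 : ∀ a, 1589941 ≤ a → a < 2^25 → PP a :=
    cov_step 1589941 2649893 _ (by norm_num) (by norm_num) c4
  have c6 : ∀ a, 953977 ≤ a → a < 2^25 → PP a :=
    cov_step 953977 1589941 _ (by norm_num) (by norm_num) c5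
  have c7 : ∀ a, 572387 ≤ a → a < 2^25 → PP a :=
    cov_step 572387 953977 _ (by norm_num) (by norm_num) c6
  have c8 : ∀ a, 343433 ≤ a → a < 2^25 → PP a :=
    cov_step 343433 572387 _ (by norm_num) (by norm_num) c7
  have c9 : ∀ a, 206083 ≤ a → a < 2^25 → PP a :=
    cov_step 206083 343433 _ (by norm_num) (by norm_num) c8
  have c10 : ∀ a, 123661 ≤ a → a < 2^25 → PP a :=
    cov_step 123661 206083 _ (by norm_num) (by norm_num) c9
  have c11 : ∀ a, 74197 ≤ a → a < 2^25 → PP a :=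
    cov_step 74197 123661 _ (by norm_num) (by norm_num) c10
  have c12 : ∀ a, 44519 ≤ a → a < 2^25 → PP a :=
    cov_step 44519 74197 _ (by norm_num) (by norm_num) c11
  have c13 : ∀ a, 26717 ≤ a → a < 2^25 → PP a :=
    cov_step 26717 44519 _ (by norm_num) (by norm_num) c12
  have c14 : ∀ a, 16033 ≤ a → a < 2^25 → PP a :=
    cov_step 16033 26717 _ (by norm_num) (by norm_num) c13
  have c15 : ∀ a, 9631 ≤ a → a < 2^25 → PP a :=
    cov_step 9631 16033 _ (by norm_num) (by norm_num) c14
  have c16 : ∀ a, 5779 ≤ a → a < 2^25 → PP a :=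
    cov_step 5779 9631 _ (by norm_num) (by norm_num) c15
  have c17 : ∀ a, 3469 ≤ a → a < 2^25 → PP a :=
    cov_step 3469 5779 _ (by norm_num) (by norm_num) c16
  have c18 : ∀ a, 2089 ≤ a → a < 2^25 → PP a :=
    cov_step 2089 3469 _ (by norm_num) (by norm_num) c17
  have c19 : ∀ a, 1259 ≤ a → a < 2^25 → PP a :=
    cov_step 1259 2089 _ (by norm_num) (by norm_num) c18
  have c20 : ∀ a, 761 ≤ a → a < 2^25 → PP a :=
    cov_step 761 1259 _ (by norm_num) (by norm_num) c19
  have c21 : ∀ a, 461 ≤ a → a < 2^25 → PP a :=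
    cov_step 461 761 _ (by norm_num) (by norm_num) c20
  have c22 : ∀ a, 277 ≤ a → a < 2^25 → PP a :=
    cov_step 277 461 _ (by norm_num) (by norm_num) c21
  have c23 : ∀ a, 167 ≤ a → a < 2^25 → PP a :=
    cov_step 167 277 _ (by norm_num) (by norm_num) c22
  have c24 : ∀ a, 101 ≤ a → a < 2^25 → PP a :=
    cov_step 101 167 _ (by norm_num) (by norm_num) c23
  have c25 : ∀ a, 61 ≤ a → a < 2^25 → PP a :=
    cov_step 61 101 _ (by norm_num) (by norm_num) c24
  have c26 : ∀ a, 37 ≤ a → a < 2^25 → PP a :=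
    cov_step 37 61 _ (by norm_num) (by norm_num) c25
  have c27 : ∀ a, 23 ≤ a → a < 2^25 → PP a :=
    cov_step 23 37 _ (by norm_num) (by norm_num) c26
  have c28 : ∀ a, 17 ≤ a → a < 2^25 → PP a :=
    cov_step 17 23 _ (by norm_num) (by norm_num) c27
  have c29 : ∀ a, 11 ≤ a → a < 2^25 → PP a :=
    cov_step 11 17 _ (by norm_num) (by norm_num) c28
  have c30 : ∀ a, 7 ≤ a → a < 2^25 → PP a :=
    cov_step 7 11 _ (by norm_num) (by norm_num) c29
  have c31 : ∀ a, 5 ≤ a → a < 2^25 → PP a :=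
    cov_step 5 7 _ (by norm_num) (by norm_num) c30
  have c32 : ∀ a, 3 ≤ a → a < 2^25 → PP a :=
    cov_step 3 5 _ (by norm_num) (by norm_num) c31
  have c33 : ∀ a, 2 ≤ a → a < 2^25 → PP a :=
    cov_step 2 3 _ (by norm_num) (by norm_num) c32
  exact c33

lemma KK : ∀ a : ℕ, 2 ≤ a → ∃ q, q.Prime ∧ q ≤ a ∧ 3*(a+1) ≤ 5*q := by
  intro a ha
  rcases lt_or_ge a (2^25) with h | h
  · exact K_small a ha h
  · exact K_large h

lemma primePi_eq (x : ℝ) : primePi x = Nat.count Nat.Prime (⌊x⌋₊ + 1) := rfl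

lemma count_prime_2 : Nat.count Nat.Prime 2 = 0 := by decide
lemma count_prime_3 : Nat.count Nat.Prime 3 = 1 := by decide
lemma count_prime_5 : Nat.count Nat.Prime 5 = 2 := by decide

lemma nth_prime_zero : Nat.nth Nat.Prime 0 = 2 := by
  have := Nat.nth_count Nat.prime_two
  rwa [count_prime_2] at this

lemma nth_prime_one : Nat.nth Nat.Prime 1 = 3 := by
  have := Nat.nth_count Nat.prime_three
  rwa [count_prime_3] at this

lemma nth_prime_two : Nat.nth Nat.Prime 2 = 5 := by
  have := Nat.nth_count (by norm_num : Nat.Prime 5)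
  rwa [count_prime_5] at this

/-- The key Bertrand-strength statement -/
lemma stepA {k x : ℝ} (hk1 : 5/3 ≤ k) (hx : (2:ℝ) ≤ x) :
    primePi (x / k) + 1 ≤ primePi x := by
  have hk0 : (0:ℝ) < k := by linarith
  have hx0 : (0:ℝ) < x := by linarith
  set a := ⌊x⌋₊ with hadef
  have ha2 : 2 ≤ a := by
    rw [hadef]
    exact Nat.le_floor (by exact_mod_cast hx)
  obtain ⟨q, hq, hqa, h35⟩ := KK a ha2
  have hxa : x < (a:ℝ) + 1 := Nat.lt_floor_add_one x
  have hdiv : x / k < q := by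
    have h1 : x / k ≤ 3 * x / 5 := by
      rw [div_le_div_iff₀ hk0 (by norm_num)]
      nlinarith
    have h2 : 3 * x / 5 < 3 * ((a:ℝ) + 1) / 5 := by linarith
    have h3 : 3 * ((a:ℝ) + 1) / 5 ≤ (q:ℝ) := by
      have : (3 * (a + 1) : ℕ) ≤ (5 * q : ℕ) := h35
      have := (Nat.cast_le (α := ℝ)).2 this
      push_cast at this
      linarith
    linarith
  have hfl : ⌊x / k⌋₊ < q := by
    rw [Nat.floor_lt (by positivity)]
    exact hdiv
  rw [primePi_eq, primePi_eq, ← hadef]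
  have h1 : Nat.count Nat.Prime (⌊x/k⌋₊ + 1) ≤ Nat.count Nat.Prime q :=
    Nat.count_monotone _ (by omega)
  have h2 : Nat.count Nat.Prime (q + 1) = Nat.count Nat.Prime q + 1 := by
    rw [Nat.count_succ, if_pos hq]
  have h3 : Nat.count Nat.Prime (q+1) ≤ Nat.count Nat.Prime (a + 1) :=
    Nat.count_monotone _ (by omega)
  omega

theorem stmt9 (k : ℝ) (hk1 : 5 / 3 ≤ k) (hk2 : k < 2) (n : ℕ) (hn : 1 ≤ n) :
    Ram k n = nthPrime n ↔ n = 1 := by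
  have hk0 : (0:ℝ) < k := by linarith
  constructor
  · intro h
    by_contra hne
    have hn2 : 2 ≤ n := by omega
    set p := nthPrime n with hp
    have hpp : p.Prime := Nat.prime_nth_prime _
    set S := {m : ℕ | 0 < m ∧ ∀ x : ℝ, (m : ℝ) ≤ x → primePi (x / k) + n ≤ primePi x} with hS
    have hRam : Ram k n = sInf S := rfl
    have hSne : S.Nonempty := by
      by_contra hemp
      rw [Set.not_nonempty_iff_eq_empty] at hemp
      rw [hRam, hemp, Nat.sInf_empty] at h
      have := hpp.two_le
      omega
    have hmem : p ∈ S := by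
      rw [← h, hRam]
      exact Nat.sInf_mem hSne
    rcases Nat.eq_or_lt_of_le hn2 with h2 | h3
    · -- n = 2, p = 3, use x = 4
      have hp3 : p = 3 := by rw [hp, nthPrime, ← h2, nth_prime_one]
      have hx4 := hmem.2 4 (by rw [hp3]; norm_num)
      have hpi4 : primePi 4 = 2 := by
        rw [primePi_eq]
        have : ⌊(4:ℝ)⌋₊ = 4 := by norm_num
        rw [this]
        decide
      have hlow : 2 < 4 / k := by
        rw [lt_div_iff₀ hk0]
        nlinarith
      have hfl : 2 ≤ ⌊4 / k⌋₊ := Nat.le_floor (by exact_mod_cast hlow.le)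
      have hcnt : 1 ≤ primePi (4 / k) := by
        rw [primePi_eq]
        calc 1 = Nat.count Nat.Prime 3 := count_prime_3.symm
          _ ≤ Nat.count Nat.Prime (⌊4/k⌋₊ + 1) := Nat.count_monotone _ (by omega)
      rw [← h2] at hx4
      omega
    · -- n ≥ 3, use x = p
      have hmono : Monotone (Nat.nth Nat.Prime) :=
        Nat.nth_monotone Nat.infinite_setOf_prime
      have hp5 : 5 ≤ p := by
        rw [hp, nthPrime]
        calc 5 = Nat.nth Nat.Prime 2 := nth_prime_two.symm
          _ ≤ Nat.nth Nat.Prime (n-1) := hmono (by omega)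
      have hxp := hmem.2 p (le_refl _)
      have hpi : primePi p = n := by
        rw [primePi_eq, Nat.floor_natCast, Nat.count_succ, if_pos hpp]
        have : Nat.count Nat.Prime (Nat.nth Nat.Prime (n-1)) = n - 1 := by
          exact Nat.count_nth_of_infinite Nat.infinite_setOf_prime _
        rw [hp, nthPrime, this]
        omega
      have hlow : 2 ≤ (p:ℝ) / k := by
        rw [le_div_iff₀ hk0]
        have : (5:ℝ) ≤ (p:ℝ) := by exact_mod_cast hp5
        nlinarith
      have hfl : 2 ≤ ⌊(p:ℝ) / k⌋₊ := Nat.le_floor (by exact_mod_cast hlow)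
      have hcnt : 1 ≤ primePi ((p:ℝ) / k) := by
        rw [primePi_eq]
        calc 1 = Nat.count Nat.Prime 3 := count_prime_3.symm
          _ ≤ Nat.count Nat.Prime (⌊(p:ℝ)/k⌋₊ + 1) := Nat.count_monotone _ (by omega)
      omega
  · rintro rfl
    set S := {m : ℕ | 0 < m ∧ ∀ x : ℝ, (m : ℝ) ≤ x → primePi (x / k) + 1 ≤ primePi x} with hS
    have h2S : 2 ∈ S := by
      refine ⟨by norm_num, fun x hx => ?_⟩
      exact stepA hk1 (by exact_mod_cast hx)
    have h1S : 1 ∉ S := by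
      rintro ⟨-, hall⟩
      have := hall 1 (by norm_num)
      have hpi1 : primePi 1 = 0 := by
        rw [primePi_eq]
        have : ⌊(1:ℝ)⌋₊ = 1 := by norm_num
        rw [this]
        decide
      omega
    have hRam : Ram k 1 = sInf S := rfl
    have hle : sInf S ≤ 2 := Nat.sInf_le h2S
    have hmem := Nat.sInf_mem ⟨2, h2S⟩
    have hge : 2 ≤ sInf S := by
      have hne1 : sInf S ≠ 1 := fun hh => h1S (hh ▸ hmem)
      have hpos : 0 < sInf S := hmem.1
      omega
    have : Ram k 1 = 2 := by omega
    rw [this, nthPrime, nth_prime_zero]
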